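/- Let N ≥ 1 and α > 0. For each n ≥ 2, let f_n : ℝ^N → ℝ be defined by f_n(v) = e^(-α|v|²) · 1_{n ≤ |v| ≤ n²}, and define the temperature T_n by N·T_n = (∫ |v|² f_n(v) dv) / (∫ f_n(v) dv). Then T_n / (n²/N) tends to 1 as n → ∞. -/

import Mathlib

open MeasureTheory Filter Metric

set_option maxHeartbeats 1000000 in
theorem stmt_14 (N : ℕ) (hN : 1 ≤ N) (α : ℝ) (hα : 0 < α) :
    Tendsto (fun n : ℕ =>
        ((∫ v : EuclideanSpace ℝ (Fin N), ‖v‖ ^ 2 *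
            Set.indicator {v : EuclideanSpace ℝ (Fin N) | (n : ℝ) ≤ ‖v‖ ∧ ‖v‖ ≤ (n : ℝ) ^ 2}
              (fun v => Real.exp (-α * ‖v‖ ^ 2)) v) /
          (∫ v : EuclideanSpace ℝ (Fin N),
            Set.indicator {v : EuclideanSpace ℝ (Fin N) | (n : ℝ) ≤ ‖v‖ ∧ ‖v‖ ≤ (n : ℝ) ^ 2}
              (fun v => Real.exp (-α * ‖v‖ ^ 2)) v)) / (n : ℝ) ^ 2)
      atTop (nhds 1) := by
  obtain ⟨M, rfl⟩ : ∃ M, N = M + 1 := ⟨N - 1, (Nat.succ_pred_eq_of_pos hN).symm⟩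
  set N := M + 1 with hNdef
  set E := EuclideanSpace ℝ (Fin N) with hE
  haveI : Nonempty (Fin N) := ⟨⟨0, Nat.succ_pos M⟩⟩
  haveI : Nontrivial E := by
    exact Module.nontrivial_of_finrank_eq_succ finrank_euclideanSpace_fin
  have hfin : Module.finrank ℝ E = N := finrank_euclideanSpace_fin
  set g : E → ℝ := fun v => Real.exp (-α * ‖v‖ ^ 2) with hg
  set S : ℕ → Set E := fun n => {v : E | (n : ℝ) ≤ ‖v‖ ∧ ‖v‖ ≤ (n : ℝ) ^ 2} with hS
  set A : ℕ → ℝ := fun n => ∫ v : E, (S n).indicator g v with hA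
  set B : ℕ → ℝ := fun n => ∫ v : E, ‖v‖ ^ 2 * (S n).indicator g v with hB
  set ω : ℝ := (volume (ball (0 : E) 1)).toReal with hω
  have hωpos : 0 < ω := by
    rw [hω]
    exact ENNReal.toReal_pos (measure_ball_pos volume 0 one_pos).ne'
      measure_ball_lt_top.ne
  -- basic facts about S n
  have hScompact : ∀ n : ℕ, IsCompact (S n) := by
    intro n
    have hclosed : IsClosed (S n) := by
      have : S n = (fun v : E => ‖v‖) ⁻¹' Set.Icc (n : ℝ) ((n : ℝ) ^ 2) := rfl
      rw [this]
      exact isClosed_Icc.preimage continuous_norm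
    refine isCompact_of_isClosed_isBounded hclosed ?_
    refine (isBounded_closedBall (x := (0 : E)) (r := (n : ℝ) ^ 2)).subset ?_
    intro v hv
    exact mem_closedBall_zero_iff.2 hv.2
  have hSmeas : ∀ n : ℕ, MeasurableSet (S n) := fun n => (hScompact n).measurableSet
  have hgcont : Continuous g := by
    continuity
  have hAint : ∀ n : ℕ, Integrable ((S n).indicator g) := by
    intro n
    exact (integrable_indicator_iff (hSmeas n)).2
      (hgcont.continuousOn.integrableOn_compact (hScompact n))
  have hBrw : ∀ n : ℕ, (fun v : E => ‖v‖ ^ 2 * (S n).indicator g v)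
      = (S n).indicator (fun v => ‖v‖ ^ 2 * g v) := by
    intro n
    funext v
    by_cases hv : v ∈ S n
    · simp [Set.indicator_of_mem hv]
    · simp [Set.indicator_of_notMem hv]
  have hBint : ∀ n : ℕ, Integrable (fun v : E => ‖v‖ ^ 2 * (S n).indicator g v) := by
    intro n
    rw [hBrw n]
    exact (integrable_indicator_iff (hSmeas n)).2
      (((continuous_norm.pow 2).mul hgcont).continuousOn.integrableOn_compact (hScompact n))
  have hgnonneg : ∀ v : E, 0 ≤ g v := fun v => (Real.exp_pos _).le
  have hindnonneg : ∀ n (v : E), 0 ≤ (S n).indicator g v := by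
    intro n v
    exact Set.indicator_nonneg (fun x _ => hgnonneg x) v
  -- lower bound : n^2 * A n ≤ B n
  have hlowB : ∀ n : ℕ, (n : ℝ) ^ 2 * A n ≤ B n := by
    intro n
    have : ∀ v : E, (n : ℝ) ^ 2 * (S n).indicator g v ≤ ‖v‖ ^ 2 * (S n).indicator g v := by
      intro v
      by_cases hv : v ∈ S n
      · have h1 : (n : ℝ) ^ 2 ≤ ‖v‖ ^ 2 := by
          have := hv.1
          nlinarith [norm_nonneg v]
        exact mul_le_mul_of_nonneg_right h1 (hindnonneg n v)
      · simp [Set.indicator_of_notMem hv]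
    calc (n : ℝ) ^ 2 * A n = ∫ v : E, (n : ℝ) ^ 2 * (S n).indicator g v := by
          rw [hA]; rw [integral_const_mul]
      _ ≤ B n := integral_mono ((hAint n).const_mul _) (hBint n) this
  -- upper bound
  have hupB : ∀ n : ℕ, 2 ≤ n →
      B n ≤ ((n : ℝ) + 2) ^ 2 * A n
        + (n : ℝ) ^ 4 * Real.exp (-α * ((n : ℝ) + 2) ^ 2) * (((n:ℝ) ^ 2) ^ N * ω) := by
    intro n hn
    have hn0 : (0 : ℝ) ≤ (n : ℝ) ^ 2 := by positivity
    have hvol : (volume (closedBall (0 : E) ((n : ℝ) ^ 2))).toReal = ((n:ℝ) ^ 2) ^ N * ω := by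
      rw [Measure.addHaar_closedBall volume 0 hn0, hfin, ENNReal.toReal_mul,
        ENNReal.toReal_ofReal (by positivity)]
    have hptwise : ∀ v : E, ‖v‖ ^ 2 * (S n).indicator g v ≤
        ((n : ℝ) + 2) ^ 2 * (S n).indicator g v
          + (closedBall (0 : E) ((n : ℝ) ^ 2)).indicator
              (fun _ => (n : ℝ) ^ 4 * Real.exp (-α * ((n : ℝ) + 2) ^ 2)) v := by
      intro v
      by_cases hv : v ∈ S n
      · have hvball : v ∈ closedBall (0 : E) ((n : ℝ) ^ 2) := mem_closedBall_zero_iff.2 hv.2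
        rw [Set.indicator_of_mem hv, Set.indicator_of_mem hvball]
        by_cases hsmall : ‖v‖ ≤ (n : ℝ) + 2
        · have h1 : ‖v‖ ^ 2 * g v ≤ ((n : ℝ) + 2) ^ 2 * g v := by
            have : ‖v‖ ^ 2 ≤ ((n : ℝ) + 2) ^ 2 := by nlinarith [norm_nonneg v]
            exact mul_le_mul_of_nonneg_right this (hgnonneg v)
          have h2 : (0 : ℝ) ≤ (n : ℝ) ^ 4 * Real.exp (-α * ((n : ℝ) + 2) ^ 2) := by positivity
          linarith
        · push_neg at hsmall
          have h1 : ‖v‖ ^ 2 ≤ (n : ℝ) ^ 4 := by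
            have := hv.2
            nlinarith [norm_nonneg v]
          have h2 : g v ≤ Real.exp (-α * ((n : ℝ) + 2) ^ 2) := by
            rw [hg]
            apply Real.exp_le_exp.2
            have hsq : ((n : ℝ) + 2) ^ 2 ≤ ‖v‖ ^ 2 := by nlinarith [norm_nonneg v]
            nlinarith [mul_le_mul_of_nonneg_left hsq hα.le]
          have h3 : ‖v‖ ^ 2 * g v ≤ (n : ℝ) ^ 4 * Real.exp (-α * ((n : ℝ) + 2) ^ 2) :=
            mul_le_mul h1 h2 (hgnonneg v) (by positivity)
          have h4 : (0 : ℝ) ≤ ((n : ℝ) + 2) ^ 2 * g v := by positivity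
          linarith
      · rw [Set.indicator_of_notMem hv]
        have : (0:ℝ) ≤ (closedBall (0 : E) ((n : ℝ) ^ 2)).indicator
              (fun _ => (n : ℝ) ^ 4 * Real.exp (-α * ((n : ℝ) + 2) ^ 2)) v :=
          Set.indicator_nonneg (fun x _ => by positivity) v
        simp only [mul_zero, zero_add]
        linarith
    have hint2 : Integrable ((closedBall (0 : E) ((n : ℝ) ^ 2)).indicator
        (fun _ : E => (n : ℝ) ^ 4 * Real.exp (-α * ((n : ℝ) + 2) ^ 2))) := by
      refine (integrable_indicator_iff measurableSet_closedBall).2 ?_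
      exact integrableOn_const measure_closedBall_lt_top.ne
    calc B n ≤ ∫ v : E, (((n : ℝ) + 2) ^ 2 * (S n).indicator g v
          + (closedBall (0 : E) ((n : ℝ) ^ 2)).indicator
              (fun _ => (n : ℝ) ^ 4 * Real.exp (-α * ((n : ℝ) + 2) ^ 2)) v) := by
          exact integral_mono (hBint n) (((hAint n).const_mul _).add hint2) hptwise
      _ = ((n : ℝ) + 2) ^ 2 * A n
          + (n : ℝ) ^ 4 * Real.exp (-α * ((n : ℝ) + 2) ^ 2) * (((n:ℝ) ^ 2) ^ N * ω) := by
          rw [integral_add ((hAint n).const_mul _) hint2, integral_const_mul,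
            integral_indicator_const _ measurableSet_closedBall, smul_eq_mul, measureReal_def, hvol]
          simp only [hA]
          ring
  -- lower bound on A n
  have hlowA : ∀ n : ℕ, 2 ≤ n →
      Real.exp (-α * ((n : ℝ) + 1) ^ 2) * ((n : ℝ) ^ M * ω) ≤ A n := by
    intro n hn
    have hn2 : (2 : ℝ) ≤ (n : ℝ) := by exact_mod_cast hn
    set S' : Set E := closedBall (0 : E) ((n : ℝ) + 1) \ ball (0 : E) (n : ℝ) with hS'
    have hsub : ball (0 : E) (n : ℝ) ⊆ closedBall (0 : E) ((n : ℝ) + 1) :=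
      (ball_subset_closedBall).trans (closedBall_subset_closedBall (by linarith))
    have hptwise : ∀ v : E,
        S'.indicator (fun _ => Real.exp (-α * ((n : ℝ) + 1) ^ 2)) v ≤ (S n).indicator g v := by
      intro v
      by_cases hv : v ∈ S'
      · have h1 : (n : ℝ) ≤ ‖v‖ := by
          have := hv.2
          rw [mem_ball_zero_iff] at this
          linarith [not_lt.1 this]
        have h2 : ‖v‖ ≤ (n : ℝ) + 1 := mem_closedBall_zero_iff.1 hv.1
        have hvS : v ∈ S n := ⟨h1, le_trans h2 (by nlinarith)⟩
        rw [Set.indicator_of_mem hv, Set.indicator_of_mem hvS, hg]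
        apply Real.exp_le_exp.2
        have hsq : ‖v‖ ^ 2 ≤ ((n : ℝ) + 1) ^ 2 := by nlinarith [norm_nonneg v]
        nlinarith [mul_le_mul_of_nonneg_left hsq hα.le]
      · rw [Set.indicator_of_notMem hv]
        exact hindnonneg n v
    have hS'meas : MeasurableSet S' := measurableSet_closedBall.diff measurableSet_ball
    have hint1 : Integrable (S'.indicator (fun _ : E => Real.exp (-α * ((n : ℝ) + 1) ^ 2))) := by
      refine (integrable_indicator_iff hS'meas).2 ?_
      refine integrableOn_const ?_
      exact (lt_of_le_of_lt (measure_mono Set.diff_subset) measure_closedBall_lt_top).ne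
    have hballn : volume (ball (0 : E) (n : ℝ))
        = ENNReal.ofReal ((n : ℝ) ^ N) * volume (ball (0 : E) 1) := by
      rw [Measure.addHaar_ball volume 0 (by positivity : (0:ℝ) ≤ (n : ℝ)), hfin]
    have hcb : volume (closedBall (0 : E) ((n : ℝ) + 1))
        = ENNReal.ofReal (((n : ℝ) + 1) ^ N) * volume (ball (0 : E) 1) := by
      rw [Measure.addHaar_closedBall volume 0 (by positivity : (0:ℝ) ≤ (n : ℝ) + 1), hfin]
    have hvolS' : (volume S').toReal = (((n : ℝ) + 1) ^ N - (n : ℝ) ^ N) * ω := by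
      have hdiff : volume S'
          = volume (closedBall (0 : E) ((n : ℝ) + 1)) - volume (ball (0 : E) (n : ℝ)) := by
        rw [hS', measure_diff hsub measurableSet_ball.nullMeasurableSet measure_ball_lt_top.ne]
      rw [hdiff, ENNReal.toReal_sub_of_le (measure_mono hsub) measure_closedBall_lt_top.ne,
        hballn, hcb, ENNReal.toReal_mul, ENNReal.toReal_mul,
        ENNReal.toReal_ofReal (by positivity), ENNReal.toReal_ofReal (by positivity), ← hω]
      ring
    have hannulus : (n : ℝ) ^ M ≤ ((n : ℝ) + 1) ^ N - (n : ℝ) ^ N := by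
      have h1 : ((n : ℝ) + 1) ^ N = ((n : ℝ) + 1) ^ M * ((n : ℝ) + 1) := by
        rw [hNdef, pow_succ]
      have h2 : ((n : ℝ)) ^ N = ((n : ℝ)) ^ M * (n : ℝ) := by rw [hNdef, pow_succ]
      have h3 : (n : ℝ) ^ M ≤ ((n : ℝ) + 1) ^ M := by gcongr <;> linarith
      have h4 := mul_le_mul_of_nonneg_right h3 (by linarith : (0:ℝ) ≤ (n : ℝ) + 1)
      rw [h1, h2]
      nlinarith
    calc Real.exp (-α * ((n : ℝ) + 1) ^ 2) * ((n : ℝ) ^ M * ω) ≤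
        Real.exp (-α * ((n : ℝ) + 1) ^ 2) * ((((n : ℝ) + 1) ^ N - (n : ℝ) ^ N) * ω) :=
          mul_le_mul_of_nonneg_left (mul_le_mul_of_nonneg_right hannulus hωpos.le)
            (Real.exp_pos _).le
      _ = ∫ v : E, S'.indicator (fun _ => Real.exp (-α * ((n : ℝ) + 1) ^ 2)) v := by
          rw [integral_indicator_const _ hS'meas, smul_eq_mul, measureReal_def, hvolS']
          ring
      _ ≤ A n := integral_mono hint1 (hAint n) hptwise
  -- positivity of A
  have hApos : ∀ n : ℕ, 2 ≤ n → 0 < A n := by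
    intro n hn
    refine lt_of_lt_of_le ?_ (hlowA n hn)
    have hn2 : (2 : ℝ) ≤ (n : ℝ) := by exact_mod_cast hn
    positivity
  -- the upper comparison sequence
  set u : ℕ → ℝ := fun n => (((n : ℝ) + 2) / n) ^ 2
      + (n : ℝ) ^ (M + 4) * Real.exp (-α * (2 * (n : ℝ) + 3)) with hu
  have hfle : ∀ n : ℕ, 2 ≤ n → B n / A n / (n : ℝ) ^ 2 ≤ u n := by
    intro n hn
    have hn2 : (2 : ℝ) ≤ (n : ℝ) := by exact_mod_cast hn
    have hnpos : (0 : ℝ) < (n : ℝ) := by linarith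
    have hApos' := hApos n hn
    set D : ℝ := Real.exp (-α * ((n : ℝ) + 1) ^ 2) * ((n : ℝ) ^ M * ω) with hD
    have hDpos : 0 < D := by rw [hD]; positivity
    set T : ℝ := (n : ℝ) ^ 4 * Real.exp (-α * ((n : ℝ) + 2) ^ 2) * (((n:ℝ) ^ 2) ^ N * ω)
      with hT
    have hTpos : 0 < T := by rw [hT]; positivity
    have h1 : B n / A n ≤ ((n : ℝ) + 2) ^ 2 + T / A n := by
      rw [div_le_iff₀ hApos']
      have heq : (((n : ℝ) + 2) ^ 2 + T / A n) * A n = ((n : ℝ) + 2) ^ 2 * A n + T := by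
        field_simp
      rw [heq]
      exact hupB n hn
    have h2 : T / A n ≤ T / D := by
      apply div_le_div_of_nonneg_left hTpos.le hDpos (hlowA n hn)
    have hTD : T / D / (n : ℝ) ^ 2 = (n : ℝ) ^ (M + 4) * Real.exp (-α * (2 * (n : ℝ) + 3)) := by
      have hexp : Real.exp (-α * ((n : ℝ) + 2) ^ 2)
          = Real.exp (-α * (2 * (n : ℝ) + 3)) * Real.exp (-α * ((n : ℝ) + 1) ^ 2) := by
        rw [← Real.exp_add]
        congr 1
        ring
      rw [hT, hD, hexp, hNdef]
      have hωne : ω ≠ 0 := hωpos.ne'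
      have hexpne : Real.exp (-α * ((n : ℝ) + 1) ^ 2) ≠ 0 := (Real.exp_pos _).ne'
      field_simp
      ring
    calc B n / A n / (n : ℝ) ^ 2 ≤ (((n : ℝ) + 2) ^ 2 + T / D) / (n : ℝ) ^ 2 := by
          apply div_le_div_of_nonneg_right _ (by positivity)
          linarith
      _ = (((n : ℝ) + 2) / n) ^ 2 + T / D / (n : ℝ) ^ 2 := by
          rw [add_div, div_pow, div_div]
      _ = u n := by rw [hu, hTD]
  have hgef : ∀ n : ℕ, 2 ≤ n → 1 ≤ B n / A n / (n : ℝ) ^ 2 := by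
    intro n hn
    have hn2 : (2 : ℝ) ≤ (n : ℝ) := by exact_mod_cast hn
    have hApos' := hApos n hn
    rw [le_div_iff₀ (by positivity : (0:ℝ) < (n : ℝ) ^ 2), one_mul, le_div_iff₀ hApos']
    linarith [hlowB n]
  -- limits
  have hu1 : Tendsto u atTop (nhds 1) := by
    have h1 : Tendsto (fun n : ℕ => (((n : ℝ) + 2) / n) ^ 2) atTop (nhds 1) := by
      have : Tendsto (fun n : ℕ => ((n : ℝ) + 2) / n) atTop (nhds 1) := by
        have h2 : Tendsto (fun n : ℕ => 1 + 2 / (n : ℝ)) atTop (nhds (1 + 0)) :=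
          tendsto_const_nhds.add
            (tendsto_const_nhds.div_atTop tendsto_natCast_atTop_atTop)
        rw [add_zero] at h2
        apply h2.congr'
        filter_upwards [eventually_ge_atTop 1] with n hn
        have : (n : ℝ) ≠ 0 := by
          have : (1 : ℝ) ≤ (n : ℝ) := by exact_mod_cast hn
          linarith
        field_simp
      have := this.pow 2
      simpa using this
    have h2 : Tendsto (fun n : ℕ => (n : ℝ) ^ (M + 4) * Real.exp (-α * (2 * (n : ℝ) + 3)))
        atTop (nhds 0) := by
      have hreal : Tendsto (fun x : ℝ => x ^ (M + 4) * Real.exp (-α * (2 * x + 3)))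
          atTop (nhds 0) := by
        have hc : (0 : ℝ) < 2 * α := by linarith
        have hbase : Tendsto (fun y : ℝ => y ^ (M + 4) * Real.exp (-y)) atTop (nhds 0) :=
          Real.tendsto_pow_mul_exp_neg_atTop_nhds_zero (M + 4)
        have hlin : Tendsto (fun x : ℝ => 2 * α * x) atTop atTop :=
          Tendsto.const_mul_atTop hc tendsto_id
        have hcomp := hbase.comp hlin
        have hmul := hcomp.const_mul ((1 / (2 * α)) ^ (M + 4) * Real.exp (-3 * α))
        rw [mul_zero] at hmul
        apply hmul.congr
        intro x
        have hexp : Real.exp (-(2 * α * x)) * Real.exp (-3 * α)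
            = Real.exp (-α * (2 * x + 3)) := by
          rw [← Real.exp_add]
          congr 1
          ring
        simp only [Function.comp]
        rw [← hexp]
        have h2αne : (2 * α) ≠ 0 := hc.ne'
        field_simp
        rw [← mul_pow, one_div, inv_mul_cancel_left₀ h2αne]
      exact hreal.comp tendsto_natCast_atTop_atTop
    have := h1.add h2
    rw [add_zero] at this
    exact this
  refine tendsto_of_tendsto_of_tendsto_of_le_of_le' (g := fun _ : ℕ => (1 : ℝ))
    tendsto_const_nhds hu1 ?_ ?_
  · filter_upwards [eventually_ge_atTop 2] with n hn
    exact hgef n hn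
  · filter_upwards [eventually_ge_atTop 2] with n hn
    exact hfle n hn
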